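/- Let u, ρ, σ, τ be complex numbers with |u| = 1, and let R₁, R₂, R₃ be as in the standard parameterization of a complex hyperbolic triangle group. Then trace(R₁·R₃⁻¹·R₂·R₃) = u(2 − |στ − conj(ρ)|²) + conj(u)². -/

import Mathlib

theorem stmt_5 (u ρ σ τ : ℂ) (hu : ‖u‖ = 1)
    (R₁ R₂ R₃ : Matrix (Fin 3) (Fin 3) ℂ)
    (hR₁ : R₁ = !![u^2, ρ, -u * starRingEnd ℂ τ; 0, starRingEnd ℂ u, 0; 0, 0, starRingEnd ℂ u])
    (hR₂ : R₂ = !![starRingEnd ℂ u, 0, 0; -u * starRingEnd ℂ ρ, u^2, σ; 0, 0, starRingEnd ℂ u])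
    (hR₃ : R₃ = !![starRingEnd ℂ u, 0, 0; 0, starRingEnd ℂ u, 0; τ, -u * starRingEnd ℂ σ, u^2]) :
    Matrix.trace (R₁ * R₃⁻¹ * R₂ * R₃) =
      u * (2 - (‖σ * τ - starRingEnd ℂ ρ‖ : ℂ)^2) + (starRingEnd ℂ u)^2 := by
  have h1 : u * starRingEnd ℂ u = 1 := by
    rw [Complex.mul_conj, ← Complex.sq_norm, hu]
    norm_num
  have hne : u ≠ 0 := by
    intro h; rw [h] at hu; simp at hu
  have hc : starRingEnd ℂ u = u⁻¹ := by
    field_simp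
    linear_combination h1
  have hM : R₃⁻¹ = !![u, 0, 0; 0, u, 0;
      -τ * starRingEnd ℂ u, starRingEnd ℂ σ, (starRingEnd ℂ u)^2] := by
    rw [Matrix.inv_eq_right_inv]
    rw [hR₃]
    ext i j
    fin_cases i <;> fin_cases j <;>
      (try simp [Matrix.mul_apply, Fin.sum_univ_succ, hc]) <;>
      (try field_simp) <;> (try ring)
  have habs : ((‖σ * τ - starRingEnd ℂ ρ‖ : ℂ))^2
      = (σ * τ - starRingEnd ℂ ρ) * starRingEnd ℂ (σ * τ - starRingEnd ℂ ρ) := by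
    rw [Complex.mul_conj]
    norm_cast
    exact Complex.sq_norm _
  rw [hM, hR₁, hR₂, hR₃, Matrix.trace_fin_three]
  simp [Matrix.mul_apply, Fin.sum_univ_succ, habs, map_mul, map_sub]
  linear_combination ((starRingEnd ℂ u)^2 + 2*u
    + u * starRingEnd ℂ ρ * starRingEnd ℂ σ * starRingEnd ℂ τ
    - u * ρ * starRingEnd ℂ ρ + u * (starRingEnd ℂ u)^3
    + 2 * u^2 * starRingEnd ℂ u) * h1
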